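/- Let H be a finite-dimensional complex inner product space, let N ≥ 2 be a natural number, and let ψ_1, …, ψ_N ∈ H be vectors with ‖ψ_i‖ = 1 for every i, such that |⟨ψ_i, ψ_j⟩| < 1/(N−1) for all i ≠ j. Then dim H ≥ N. -/

import Mathlib

theorem inner_product_dimension_bound
    {H : Type*} [NormedAddCommGroup H] [InnerProductSpace ℂ H] [FiniteDimensional ℂ H]
    (N : ℕ) (hN : 2 ≤ N) (ψ : Fin N → H) (hnorm : ∀ i, ‖ψ i‖ = 1)
    (hinner : ∀ i j, i ≠ j → ‖(inner ℂ (ψ i) (ψ j) : ℂ)‖ < 1 / ((N : ℝ) - 1)) :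
    N ≤ Module.finrank ℂ H := by
  have hN1 : (0 : ℝ) < (N : ℝ) - 1 := by
    have : (2 : ℝ) ≤ (N : ℝ) := by exact_mod_cast hN
    linarith
  have hli : LinearIndependent ℂ ψ := by
    rw [Fintype.linearIndependent_iff]
    intro g hg
    by_contra hne
    push_neg at hne
    obtain ⟨k, hk⟩ := hne
    obtain ⟨i, -, hi⟩ := Finset.exists_max_image Finset.univ (fun j => ‖g j‖)
      ⟨k, Finset.mem_univ k⟩
    have hgi : 0 < ‖g i‖ := lt_of_lt_of_le (norm_pos_iff.mpr hk) (hi k (Finset.mem_univ k))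
    have h0 : (inner ℂ (ψ i) (∑ j, g j • ψ j) : ℂ) = 0 := by rw [hg, inner_zero_right]
    rw [inner_sum] at h0
    simp only [inner_smul_right] at h0
    have hii : (inner ℂ (ψ i) (ψ i) : ℂ) = 1 := by
      rw [inner_self_eq_norm_sq_to_K, hnorm i]; norm_num
    rw [← Finset.add_sum_erase Finset.univ _ (Finset.mem_univ i), hii, mul_one] at h0
    have hgi_eq : g i = -∑ j ∈ Finset.univ.erase i, g j * inner ℂ (ψ i) (ψ j) := by
      linear_combination h0
    have hlt : ‖g i‖ < ‖g i‖ := by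
      calc ‖g i‖ = ‖∑ j ∈ Finset.univ.erase i, g j * (inner ℂ (ψ i) (ψ j) : ℂ)‖ := by
            rw [hgi_eq, norm_neg]
        _ ≤ ∑ j ∈ Finset.univ.erase i, ‖g j * (inner ℂ (ψ i) (ψ j) : ℂ)‖ :=
            norm_sum_le _ _
        _ < ∑ j ∈ Finset.univ.erase i, ‖g i‖ / ((N : ℝ) - 1) := by
            apply Finset.sum_lt_sum_of_nonempty
            · obtain ⟨j, hj, hji⟩ : ∃ j, j ∈ Finset.univ ∧ j ≠ i := by
                have h1 : 1 < Finset.univ.card (α := Fin N) := by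
                  simp only [Finset.card_univ, Fintype.card_fin]; omega
                exact Finset.exists_mem_ne h1 i
              exact ⟨j, Finset.mem_erase.mpr ⟨hji, hj⟩⟩
            · intro j hj
              have hji : i ≠ j := fun h => (Finset.mem_erase.mp hj).1 h.symm
              calc ‖g j * (inner ℂ (ψ i) (ψ j) : ℂ)‖
                  = ‖g j‖ * ‖(inner ℂ (ψ i) (ψ j) : ℂ)‖ := norm_mul _ _
                _ ≤ ‖g i‖ * ‖(inner ℂ (ψ i) (ψ j) : ℂ)‖ := by
                    apply mul_le_mul_of_nonneg_right (hi j (Finset.mem_univ j))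
                      (norm_nonneg _)
                _ < ‖g i‖ * (1 / ((N : ℝ) - 1)) :=
                    (mul_lt_mul_iff_right₀ hgi).mpr (hinner i j hji)
                _ = ‖g i‖ / ((N : ℝ) - 1) := by ring
        _ = (Finset.univ.erase i).card * (‖g i‖ / ((N : ℝ) - 1)) := by
            rw [Finset.sum_const, nsmul_eq_mul]
        _ = ((N : ℝ) - 1) * (‖g i‖ / ((N : ℝ) - 1)) := by
            rw [Finset.card_erase_of_mem (Finset.mem_univ i)]
            simp only [Finset.card_univ, Fintype.card_fin]
            rw [Nat.cast_sub (by omega : 1 ≤ N)]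
            norm_num
        _ = ‖g i‖ := by field_simp
    exact lt_irrefl _ hlt
  have := hli.fintype_card_le_finrank
  simpa using this
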